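/- Every k-molecule has entanglement exactly k. -/

import Mathlib

open SimpleGraph

/-- `G` is `m`-connected in the sense of Menger: any two distinct vertices are
joined by `m` pairwise distinct, internally disjoint paths. -/
def MengerConnected {V : Type*} (m : ℕ) (G : SimpleGraph V) : Prop :=
  ∀ u v : V, u ≠ v → ∃ P : Fin m → G.Path u v, Function.Injective P ∧
    ∀ i j, i ≠ j → ∀ x, x ∈ (P i).1.support → x ∈ (P j).1.support → x = u ∨ x = v

/-- The connectivity of a graph: the largest `m` for which it is `m`-connected.
(With this definition the connectivity of the `k`-clique is `k-1`, as in the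
paper's convention.) -/
noncomputable def connectivity {V : Type*} (G : SimpleGraph V) : ℕ :=
  sSup {m | MengerConnected m G}

/-- The `k`-molecule `ϑ_{B_k}^{Bs,h}`: its vertices are a base `B_k` of `k`
vertices (the `Sum.inl` vertices) carrying the internal edge set `Bs`, together
with `h` further vertices `v₁, …, v_h` (the `Sum.inr` vertices), each adjacent
to every base vertex and to no other non-base vertex. -/
def molecule (k h : ℕ) (Bs : SimpleGraph (Fin k)) : SimpleGraph (Fin k ⊕ Fin h) where
  Adj x y :=
    match x, y with
    | Sum.inl a, Sum.inl b => Bs.Adj a b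
    | Sum.inl _, Sum.inr _ => True
    | Sum.inr _, Sum.inl _ => True
    | Sum.inr _, Sum.inr _ => False
  symm := by constructor; rintro (a | a) (b | b) hab <;> first | exact hab.symm | trivial
  loopless := by constructor; rintro (a | a) hab <;> first | exact Bs.irrefl hab | exact hab

/-- Cops have a winning strategy in the entanglement game on `G` with `k` cops,
from the position where Thief stands on `v`, the cops occupy `C`, and it is
Cops' turn: Cops may skip, place a new cop on `v`, or move a placed cop to `v`;
then Thief must move along an edge to a cop-free vertex. As an inductive
predicate this holds exactly when Cops can force the play to be finite. -/
inductive CopsWin {V : Type*} [DecidableEq V] (G : SimpleGraph V) (k : ℕ) :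
    V → Finset V → Prop
  | step {v : V} {C C' : Finset V}
      (hmove : C' = C ∨ C' = insert v C ∨ ∃ x ∈ C, C' = insert v (C.erase x))
      (hcard : C'.card ≤ k)
      (hnext : ∀ w, G.Adj v w → w ∉ C' → CopsWin G k w C') :
      CopsWin G k v C

/-- The entanglement of `G`: the least `k` such that `k` cops catch Thief from
any initial vertex chosen by Thief. -/
noncomputable def entanglement {V : Type*} [DecidableEq V] (G : SimpleGraph V) : ℕ :=
  sInf {k | ∀ v : V, CopsWin G k v ∅}

/-! ### Auxiliary lemmas -/

lemma Molecule.length_pos_of_ne {V : Type*} {G : SimpleGraph V} {u v : V} (huv : u ≠ v)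
    (p : G.Walk u v) : 0 < p.length := by
  cases p with
  | nil => exact absurd rfl huv
  | cons h q => simp [SimpleGraph.Walk.length_cons]

lemma Molecule.walk_eq_of_getVert_one {V : Type*} {G : SimpleGraph V} {u v : V} (huv : u ≠ v) :
    ∀ (p : G.Walk u v), p.IsPath → p.getVert 1 = v →
      ∀ (q : G.Walk u v), q.IsPath → q.getVert 1 = v → p = q := by
  have key : ∀ (p : G.Walk u v), p.IsPath → p.getVert 1 = v →
      ∃ hadj : G.Adj u v, p = SimpleGraph.Walk.cons hadj SimpleGraph.Walk.nil := by
    intro p hp h1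
    cases p with
    | nil => exact absurd rfl huv
    | cons hadj q =>
      rename_i x
      have hx : x = v := by
        have : (SimpleGraph.Walk.cons hadj q).getVert 1 = q.getVert 0 := rfl
        rw [SimpleGraph.Walk.getVert_zero] at this
        rw [this] at h1; exact h1
      subst hx
      have hq : q = SimpleGraph.Walk.nil :=
        SimpleGraph.Walk.isPath_iff_eq_nil.1 hp.of_cons
      subst hq
      exact ⟨hadj, rfl⟩
  intro p hp h1 q hq h2
  obtain ⟨h, rfl⟩ := key p hp h1
  obtain ⟨h', rfl⟩ := key q hq h2
  rfl

lemma Molecule.exists_nbrs {V : Type*} {G : SimpleGraph V} {m : ℕ} (hm : MengerConnected m G)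
    {u v : V} (huv : u ≠ v) :
    ∃ f : Fin m → V, Function.Injective f ∧ ∀ i, G.Adj u (f i) := by
  obtain ⟨P, hinj, hdisj⟩ := hm u v huv
  have hlen : ∀ i, 0 < (P i).1.length := fun i => Molecule.length_pos_of_ne huv (P i).1
  have hadj : ∀ i, G.Adj u ((P i).1.getVert 1) := by
    intro i
    have := (P i).1.adj_getVert_succ (hlen i)
    rwa [SimpleGraph.Walk.getVert_zero] at this
  refine ⟨fun i => (P i).1.getVert 1, ?_, hadj⟩
  intro i j hij
  simp only at hij
  by_contra hne
  have hmem : ∀ l : Fin m, (P l).1.getVert 1 ∈ (P l).1.support := fun l =>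
    SimpleGraph.Walk.mem_support_iff_exists_getVert.2 ⟨1, rfl, hlen l⟩
  have h1 : (P j).1.getVert 1 ∈ (P i).1.support := hij ▸ hmem i
  have := hdisj i j hne ((P j).1.getVert 1) h1 (hmem j)
  rcases this with h | h
  · exact G.irrefl ((hij.trans h) ▸ hadj i)
  · have h1i : (P i).1.getVert 1 = v := hij.trans h
    have heq : (P i).1 = (P j).1 :=
      Molecule.walk_eq_of_getVert_one huv (P i).1 (P i).2 h1i (P j).1 (P j).2 h
    exact hne (hinj (Subtype.ext heq))

lemma Molecule.menger_zero {V : Type*} (G : SimpleGraph V) : MengerConnected 0 G :=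
  fun _ _ _ => ⟨Fin.elim0, fun i => i.elim0, fun i => i.elim0⟩

lemma Molecule.menger_le {k m : ℕ} (Bs : SimpleGraph (Fin k)) (hk2 : 2 ≤ k)
    (hm : MengerConnected m Bs) : m ≤ k := by
  have h01 : (⟨0, by omega⟩ : Fin k) ≠ ⟨1, by omega⟩ := by simp [Fin.ext_iff]
  obtain ⟨f, hf, _⟩ := Molecule.exists_nbrs hm h01
  simpa using Fintype.card_le_of_injective f hf

lemma Molecule.conn_spec {k : ℕ} (Bs : SimpleGraph (Fin k)) (hk2 : 2 ≤ k) :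
    MengerConnected (connectivity Bs) Bs :=
  Nat.sSup_mem ⟨0, Molecule.menger_zero _⟩ ⟨k, fun _ hm => Molecule.menger_le Bs hk2 hm⟩

lemma Molecule.conn_one (Bs : SimpleGraph (Fin 1)) : connectivity Bs = 0 := by
  have hall : {m | MengerConnected m Bs} = Set.univ := by
    ext m
    simp only [Set.mem_univ, iff_true, Set.mem_setOf_eq]
    intro u v huv
    exact absurd (Subsingleton.elim u v) huv
  have : ({m | MengerConnected m Bs} : Set ℕ).Infinite := by
    rw [hall]; exact Set.infinite_univ
  exact Set.Infinite.Nat.sSup_eq_zero this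

lemma Molecule.deg_lemma {k : ℕ} (Bs : SimpleGraph (Fin k)) (hk2 : 2 ≤ k) (a : Fin k) :
    ∃ f : Fin (connectivity Bs) → Fin k, Function.Injective f ∧ ∀ i, Bs.Adj a (f i) := by
  by_cases ha : a = ⟨0, by omega⟩
  · have : a ≠ ⟨1, by omega⟩ := by simp [ha, Fin.ext_iff]
    exact Molecule.exists_nbrs (Molecule.conn_spec Bs hk2) this
  · have : a ≠ ⟨0, by omega⟩ := ha
    exact Molecule.exists_nbrs (Molecule.conn_spec Bs hk2) this

/-! ### Lower bound: Thief escapes `k-1` cops -/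

lemma Molecule.escape (k h : ℕ) (hk : 1 ≤ k) (hh : 1 ≤ h) (Bs : SimpleGraph (Fin k))
    (hcond : k - connectivity Bs ≤ h) {m : ℕ} (hm : m + 1 ≤ k)
    (v : Fin k ⊕ Fin h) (C : Finset (Fin k ⊕ Fin h)) (hC : C.card ≤ m) :
    ∃ w, (molecule k h Bs).Adj v w ∧ w ∉ C := by
  by_contra hall
  push_neg at hall
  obtain (a | b) := v
  · -- Thief on a base vertex
    have hinr : ∀ b : Fin h, Sum.inr b ∈ C := fun b => hall (Sum.inr b) trivial
    obtain ⟨f, hf, hfadj⟩ :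
        ∃ f : Fin (connectivity Bs) → Fin k, Function.Injective f ∧ ∀ i, Bs.Adj a (f i) := by
      rcases Nat.lt_or_ge k 2 with h2 | h2
      · have hk1 : k = 1 := by omega
        subst hk1
        rw [Molecule.conn_one Bs]
        exact ⟨Fin.elim0, fun i => i.elim0, fun i => i.elim0⟩
      · exact Molecule.deg_lemma Bs h2 a
    have hinl : ∀ i, Sum.inl (f i) ∈ C := fun i => hall (Sum.inl (f i)) (hfadj i)
    set A : Finset (Fin k ⊕ Fin h) :=
      Finset.univ.image (fun i => (Sum.inl (f i) : Fin k ⊕ Fin h)) with hA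
    set B : Finset (Fin k ⊕ Fin h) :=
      Finset.univ.image (Sum.inr : Fin h → Fin k ⊕ Fin h) with hB
    have hAsub : A ⊆ C := by
      intro x hx
      simp only [hA, Finset.mem_image, Finset.mem_univ, true_and] at hx
      obtain ⟨i, rfl⟩ := hx
      exact hinl i
    have hBsub : B ⊆ C := by
      intro x hx
      simp only [hB, Finset.mem_image, Finset.mem_univ, true_and] at hx
      obtain ⟨i, rfl⟩ := hx
      exact hinr i
    have hdisj : Disjoint A B := by
      rw [Finset.disjoint_left]
      intro x hx hx'
      simp only [hA, hB, Finset.mem_image, Finset.mem_univ, true_and] at hx hx'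
      obtain ⟨i, rfl⟩ := hx
      obtain ⟨j, hj⟩ := hx'
      exact Sum.inl_ne_inr hj.symm
    have hAcard : A.card = connectivity Bs := by
      rw [hA, Finset.card_image_of_injective _
        (show Function.Injective (fun i => (Sum.inl (f i) : Fin k ⊕ Fin h)) from
          fun i j hij => hf (Sum.inl_injective hij))]
      simp
    have hBcard : B.card = h := by
      rw [hB, Finset.card_image_of_injective _ Sum.inr_injective]
      simp
    have hunion : (A ∪ B).card ≤ C.card :=
      Finset.card_le_card (Finset.union_subset hAsub hBsub)
    rw [Finset.card_union_of_disjoint hdisj, hAcard, hBcard] at hunion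
    omega
  · -- Thief on an extra vertex: all its k base neighbours would be occupied
    have hinl : ∀ a : Fin k, Sum.inl a ∈ C := fun a => hall (Sum.inl a) trivial
    have : (Finset.univ.image (Sum.inl : Fin k → Fin k ⊕ Fin h)).card ≤ C.card := by
      apply Finset.card_le_card
      intro x hx
      simp only [Finset.mem_image, Finset.mem_univ, true_and] at hx
      obtain ⟨a, rfl⟩ := hx
      exact hinl a
    rw [Finset.card_image_of_injective _ Sum.inl_injective] at this
    simp only [Finset.card_univ, Fintype.card_fin] at this
    omega

lemma Molecule.nocatch (k h : ℕ) (hk : 1 ≤ k) (hh : 1 ≤ h) (Bs : SimpleGraph (Fin k))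
    (hcond : k - connectivity Bs ≤ h) {m : ℕ} (hm : m + 1 ≤ k)
    (v : Fin k ⊕ Fin h) (C : Finset (Fin k ⊕ Fin h)) :
    ¬ CopsWin (molecule k h Bs) m v C := by
  intro hw
  induction hw with
  | step hmove hcard hnext ih =>
    obtain ⟨w, hadj, hwC⟩ := Molecule.escape k h hk hh Bs hcond hm _ _ hcard
    exact ih w hadj hwC

/-! ### Upper bound: `k` cops win -/

lemma Molecule.win_inl (k h : ℕ) (Bs : SimpleGraph (Fin k)) :
    ∀ n (C : Finset (Fin k ⊕ Fin h)), (∀ x ∈ C, ∃ a, x = Sum.inl a) →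
      (Finset.univ.filter (fun a : Fin k => Sum.inl a ∉ C)).card ≤ n →
      ∀ a : Fin k, Sum.inl a ∉ C → CopsWin (molecule k h Bs) k (Sum.inl a) C := by
  intro n
  induction n with
  | zero =>
    intro C hC hcard a ha
    exfalso
    have hmem : a ∈ Finset.univ.filter (fun a : Fin k => Sum.inl a ∉ C) := by
      simp [ha]
    have := Finset.card_pos.2 ⟨a, hmem⟩
    omega
  | succ n ih =>
    intro C hC hcard a ha
    set C' : Finset (Fin k ⊕ Fin h) := insert (Sum.inl a) C with hC'def
    have hC'sub : ∀ x ∈ C', ∃ b, x = Sum.inl b := by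
      intro x hx
      rw [hC'def, Finset.mem_insert] at hx
      rcases hx with rfl | hx
      · exact ⟨a, rfl⟩
      · exact hC x hx
    have hcard' : C'.card ≤ k := by
      have hsub : C' ⊆ Finset.univ.image (Sum.inl : Fin k → Fin k ⊕ Fin h) := by
        intro x hx
        obtain ⟨b, rfl⟩ := hC'sub x hx
        simp
      have := Finset.card_le_card hsub
      rwa [Finset.card_image_of_injective _ Sum.inl_injective, Finset.card_univ,
        Fintype.card_fin] at this
    have hfilter : (Finset.univ.filter (fun b : Fin k => Sum.inl b ∉ C')).card ≤ n := by
      have hss : Finset.univ.filter (fun b : Fin k => Sum.inl b ∉ C') ⊂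
          Finset.univ.filter (fun b : Fin k => Sum.inl b ∉ C) := by
        constructor
        · intro x hx
          simp only [Finset.mem_filter, Finset.mem_univ, true_and, hC'def,
            Finset.mem_insert] at hx ⊢
          exact fun hmem => hx (Or.inr hmem)
        · intro hsub
          have hamem : a ∈ Finset.univ.filter (fun b : Fin k => Sum.inl b ∉ C) := by
            simp [ha]
          have := hsub hamem
          simp [hC'def] at this
      have := Finset.card_lt_card hss
      omega
    refine CopsWin.step (Or.inr (Or.inl rfl)) hcard' ?_
    rintro (b | b) hadj hb
    · exact ih C' hC'sub hfilter b hb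
    · refine CopsWin.step (Or.inl rfl) hcard' ?_
      rintro (c | c) hadj2 hc
      · exact ih C' hC'sub hfilter c hc
      · exact hadj2.elim

/-- every `k`-molecule has entanglement exactly `k`. -/
theorem molecule_entanglement (k h : ℕ) (hk : 1 ≤ k) (hh : 1 ≤ h)
    (Bs : SimpleGraph (Fin k)) (hcond : k - connectivity Bs ≤ h) :
    entanglement (molecule k h Bs) = k := by
  have hwin : ∀ v : Fin k ⊕ Fin h, CopsWin (molecule k h Bs) k v ∅ := by
    rintro (a | b)
    · refine Molecule.win_inl k h Bs k ∅ (by simp) ?_ a (by simp)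
      simp
    · refine CopsWin.step (Or.inl rfl) (by simp) ?_
      rintro (c | c) hadj hc
      · refine Molecule.win_inl k h Bs k ∅ (by simp) ?_ c (by simp)
        simp
      · exact hadj.elim
  have hmem : k ∈ {m | ∀ v : Fin k ⊕ Fin h, CopsWin (molecule k h Bs) m v ∅} := hwin
  refine le_antisymm (Nat.sInf_le hmem) ?_
  refine le_csInf ⟨k, hmem⟩ ?_
  intro m hm
  by_contra hlt
  push_neg at hlt
  have hm1 : m + 1 ≤ k := hlt
  exact Molecule.nocatch k h hk hh Bs hcond hm1 (Sum.inl ⟨0, by omega⟩) ∅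
    (hm (Sum.inl ⟨0, by omega⟩))
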